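/- (Affine maps preserving the light cone relation scale the Minkowski form by a constant.) Let A : ℝ⁴ → ℝ⁴ be an affine bijection such that for all x, y: time(x,y) = dist(x,y) implies time(Ax,Ay) = dist(Ax,Ay). Then there exists a constant k > 0 such that for all x, y: time(Ax,Ay)² − dist(Ax,Ay)² = k·(time(x,y)² − dist(x,y)²). In particular, A is a Poincaré transformation composed with a dilation, consistent with the claim that without symmetry axioms, worldview transformations are determined only up to change of units. -/

import Mathlib

noncomputable def mtime (x y : Fin 4 → ℝ) : ℝ := |x 3 - y 3|

noncomputable def mdist (x y : Fin 4 → ℝ) : ℝ :=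
  Real.sqrt ((x 0 - y 0) ^ 2 + (x 1 - y 1) ^ 2 + (x 2 - y 2) ^ 2)

def IsAffineMap4 (P : (Fin 4 → ℝ) → (Fin 4 → ℝ)) : Prop :=
  ∃ (L : (Fin 4 → ℝ) →ₗ[ℝ] (Fin 4 → ℝ)) (b : Fin 4 → ℝ), ∀ x, P x = L x + b

def PreservesMinkowski (P : (Fin 4 → ℝ) → (Fin 4 → ℝ)) : Prop :=
  ∀ x y, mtime x y ^ 2 - mdist x y ^ 2 = mtime (P x) (P y) ^ 2 - mdist (P x) (P y) ^ 2

def IsPoincare (P : (Fin 4 → ℝ) → (Fin 4 → ℝ)) : Prop :=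
  IsAffineMap4 P ∧ Function.Bijective P ∧ PreservesMinkowski P

noncomputable def Qmink (x : Fin 4 → ℝ) : ℝ := x 3 ^ 2 - x 0 ^ 2 - x 1 ^ 2 - x 2 ^ 2

noncomputable def Bmink (x y : Fin 4 → ℝ) : ℝ := x 3 * y 3 - x 0 * y 0 - x 1 * y 1 - x 2 * y 2

def e4 : Fin 4 → ℝ := fun i => if i = 3 then 1 else 0

def timeAxis : Set (Fin 4 → ℝ) := {x | x 0 = 0 ∧ x 1 = 0 ∧ x 2 = 0}

set_option maxHeartbeats 1000000 in
theorem lightcone_preserving_affine_scales_minkowski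
    (A : (Fin 4 → ℝ) → (Fin 4 → ℝ)) (hAff : IsAffineMap4 A)
    (hBij : Function.Bijective A)
    (hLight : ∀ x y, mtime x y = mdist x y → mtime (A x) (A y) = mdist (A x) (A y)) :
    ∃ k : ℝ, 0 < k ∧ ∀ x y,
      mtime (A x) (A y) ^ 2 - mdist (A x) (A y) ^ 2
        = k * (mtime x y ^ 2 - mdist x y ^ 2) := by
  obtain ⟨L, b, hA⟩ := hAff
  have mform : ∀ x y : Fin 4 → ℝ, mtime x y ^ 2 - mdist x y ^ 2
      = (x 3 - y 3)^2 - (x 0 - y 0)^2 - (x 1 - y 1)^2 - (x 2 - y 2)^2 := by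
    intro x y
    unfold mtime mdist
    rw [sq_abs, Real.sq_sqrt (by positivity)]
    ring
  have hsub : ∀ x y : Fin 4 → ℝ, ∀ j, A x j - A y j = L (x - y) j := by
    intro x y j
    rw [hA, hA, map_sub]
    simp
  -- null vectors map to null vectors
  have hL : ∀ v : Fin 4 → ℝ, (v 3)^2 = (v 0)^2 + (v 1)^2 + (v 2)^2 →
      (L v 3)^2 - (L v 0)^2 - (L v 1)^2 - (L v 2)^2 = 0 := by
    intro v hv
    have h1 : mtime v 0 = mdist v 0 := by
      unfold mtime mdist
      simp only [Pi.zero_apply, sub_zero]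
      rw [← Real.sqrt_sq_eq_abs, hv]
    have h2 := hLight v 0 h1
    have h3 : mtime (A v) (A 0) ^ 2 - mdist (A v) (A 0) ^ 2 = 0 := by
      rw [h2]; ring
    rw [mform (A v) (A 0)] at h3
    have h5 : ∀ j, A v j - A 0 j = L v j := by
      intro j; rw [hsub v 0 j, sub_zero]
    rw [h5 0, h5 1, h5 2, h5 3] at h3
    exact h3
  obtain ⟨u, hu⟩ : ∃ u, u = L ![1,0,0,0] := ⟨_, rfl⟩
  obtain ⟨v, hv⟩ : ∃ v, v = L ![0,1,0,0] := ⟨_, rfl⟩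
  obtain ⟨w, hw⟩ : ∃ w, w = L ![0,0,1,0] := ⟨_, rfl⟩
  obtain ⟨t, ht⟩ : ∃ t, t = L ![0,0,0,1] := ⟨_, rfl⟩
  have hrep : ∀ c0 c1 c2 c3 : ℝ, ∀ j,
      L ![c0,c1,c2,c3] j = c0 * u j + c1 * v j + c2 * w j + c3 * t j := by
    intro c0 c1 c2 c3 j
    have : (![c0,c1,c2,c3] : Fin 4 → ℝ)
        = c0 • ![1,0,0,0] + c1 • ![0,1,0,0] + c2 • ![0,0,1,0] + c3 • ![(0:ℝ),0,0,1] := by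
      funext i
      fin_cases i <;> simp
    rw [this, map_add, map_add, map_add, map_smul, map_smul, map_smul, map_smul,
      ← hu, ← hv, ← hw, ← ht]
    simp [mul_comm]
  have hmain : ∀ c0 c1 c2 c3 : ℝ, c3^2 = c0^2 + c1^2 + c2^2 →
      (c0*u 3 + c1*v 3 + c2*w 3 + c3*t 3)^2 - (c0*u 0 + c1*v 0 + c2*w 0 + c3*t 0)^2
      - (c0*u 1 + c1*v 1 + c2*w 1 + c3*t 1)^2 - (c0*u 2 + c1*v 2 + c2*w 2 + c3*t 2)^2 = 0 := by
    intro c0 c1 c2 c3 hc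
    have := hL ![c0,c1,c2,c3] (by simpa using hc)
    simpa only [hrep] using this
  obtain ⟨k, hk⟩ : ∃ k : ℝ, k = t 3 ^ 2 - t 0 ^ 2 - t 1 ^ 2 - t 2 ^ 2 := ⟨_, rfl⟩
  have hqt : t 3 ^ 2 - t 0 ^ 2 - t 1 ^ 2 - t 2 ^ 2 = k := hk.symm
  have s2 : Real.sqrt 2 ^ 2 = 2 := Real.sq_sqrt (by norm_num)
  have h1p := hmain 1 0 0 1 (by norm_num)
  have h1m := hmain 1 0 0 (-1) (by norm_num)
  have h2p := hmain 0 1 0 1 (by norm_num)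
  have h2m := hmain 0 1 0 (-1) (by norm_num)
  have h3p := hmain 0 0 1 1 (by norm_num)
  have h3m := hmain 0 0 1 (-1) (by norm_num)
  have h4p := hmain 1 1 0 (Real.sqrt 2) (by rw [s2]; norm_num)
  have h4m := hmain 1 1 0 (-Real.sqrt 2) (by rw [neg_pow, s2]; norm_num)
  have h5p := hmain 1 0 1 (Real.sqrt 2) (by rw [s2]; norm_num)
  have h5m := hmain 1 0 1 (-Real.sqrt 2) (by rw [neg_pow, s2]; norm_num)
  have h6p := hmain 0 1 1 (Real.sqrt 2) (by rw [s2]; norm_num)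
  have h6m := hmain 0 1 1 (-Real.sqrt 2) (by rw [neg_pow, s2]; norm_num)
  have hqu : u 3 ^ 2 - u 0 ^ 2 - u 1 ^ 2 - u 2 ^ 2 = -k := by
    linear_combination (h1p + h1m) / 2 - hqt
  have hqv : v 3 ^ 2 - v 0 ^ 2 - v 1 ^ 2 - v 2 ^ 2 = -k := by
    linear_combination (h2p + h2m) / 2 - hqt
  have hqw : w 3 ^ 2 - w 0 ^ 2 - w 1 ^ 2 - w 2 ^ 2 = -k := by
    linear_combination (h3p + h3m) / 2 - hqt
  have hbu : u 3 * t 3 - u 0 * t 0 - u 1 * t 1 - u 2 * t 2 = 0 := by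
    linear_combination (h1p - h1m) / 4
  have hbv : v 3 * t 3 - v 0 * t 0 - v 1 * t 1 - v 2 * t 2 = 0 := by
    linear_combination (h2p - h2m) / 4
  have hbw : w 3 * t 3 - w 0 * t 0 - w 1 * t 1 - w 2 * t 2 = 0 := by
    linear_combination (h3p - h3m) / 4
  have huv : u 3 * v 3 - u 0 * v 0 - u 1 * v 1 - u 2 * v 2 = 0 := by
    linear_combination (h4p + h4m) / 4 - hqu / 2 - hqv / 2
      - (t 3 ^ 2 - t 0 ^ 2 - t 1 ^ 2 - t 2 ^ 2) / 2 * s2 - hqt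
  have huw : u 3 * w 3 - u 0 * w 0 - u 1 * w 1 - u 2 * w 2 = 0 := by
    linear_combination (h5p + h5m) / 4 - hqu / 2 - hqw / 2
      - (t 3 ^ 2 - t 0 ^ 2 - t 1 ^ 2 - t 2 ^ 2) / 2 * s2 - hqt
  have hvw : v 3 * w 3 - v 0 * w 0 - v 1 * w 1 - v 2 * w 2 = 0 := by
    linear_combination (h6p + h6m) / 4 - hqv / 2 - hqw / 2
      - (t 3 ^ 2 - t 0 ^ 2 - t 1 ^ 2 - t 2 ^ 2) / 2 * s2 - hqt
  -- the scaling identity at the level of L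
  have hscale : ∀ z : Fin 4 → ℝ,
      (L z 3)^2 - (L z 0)^2 - (L z 1)^2 - (L z 2)^2
        = k * ((z 3)^2 - (z 0)^2 - (z 1)^2 - (z 2)^2) := by
    intro z
    have hz : (z : Fin 4 → ℝ) = ![z 0, z 1, z 2, z 3] := by
      funext i; fin_cases i <;> rfl
    have hLz : ∀ j, L z j = z 0 * u j + z 1 * v j + z 2 * w j + z 3 * t j := by
      intro j
      conv_lhs => rw [hz]
      exact hrep (z 0) (z 1) (z 2) (z 3) j
    rw [hLz 0, hLz 1, hLz 2, hLz 3]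
    linear_combination (z 3)^2 * hqt + (z 0)^2 * hqu + (z 1)^2 * hqv + (z 2)^2 * hqw
      + 2 * z 0 * z 3 * hbu + 2 * z 1 * z 3 * hbv + 2 * z 2 * z 3 * hbw
      + 2 * z 0 * z 1 * huv + 2 * z 0 * z 2 * huw + 2 * z 1 * z 2 * hvw
  -- k ≠ 0
  have hkne : k ≠ 0 := by
    intro h0
    obtain ⟨p, hp⟩ := hBij.2 (![0,0,0,1] + b)
    have hLp : ∀ j, L p j = (![(0:ℝ),0,0,1]) j := by
      intro j
      have := congrFun hp j
      rw [hA] at this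
      simpa using congrArg (fun r => r - b j) this
    have hq := hscale p
    rw [hLp 0, hLp 1, hLp 2, hLp 3, h0, zero_mul] at hq
    norm_num at hq
    have e3 : (![(0:ℝ),0,0,1] : Fin 4 → ℝ) 3 = 1 := rfl
    have e2 : (![(0:ℝ),0,0,1] : Fin 4 → ℝ) 2 = 0 := rfl
    rw [e3, e2] at hq
    norm_num at hq
  -- k > 0
  have hkpos : 0 < k := by
    rcases lt_trichotomy k 0 with hneg | h0 | hpos
    · exfalso
      clear h1p h1m h2p h2m h3p h3m h4p h4m h5p h5m h6p h6m hmain hrep hscale hL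
        hLight mform hsub hbu hbv hbw hqw huw hvw hkne hA hk hqt s2 hu hv hw ht
      have hU : 0 < u 3 ^ 2 - u 0 ^ 2 - u 1 ^ 2 - u 2 ^ 2 := by
        rw [hqu]; exact neg_pos.mpr hneg
      have hV : 0 < v 3 ^ 2 - v 0 ^ 2 - v 1 ^ 2 - v 2 ^ 2 := by
        rw [hqv]; exact neg_pos.mpr hneg
      have cs : (u 0 * v 0 + u 1 * v 1 + u 2 * v 2) ^ 2
          ≤ (u 0 ^ 2 + u 1 ^ 2 + u 2 ^ 2) * (v 0 ^ 2 + v 1 ^ 2 + v 2 ^ 2) := by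
        nlinarith [sq_nonneg (u 0 * v 1 - u 1 * v 0), sq_nonneg (u 0 * v 2 - u 2 * v 0),
          sq_nonneg (u 1 * v 2 - u 2 * v 1)]
      have hb' : u 3 * v 3 = u 0 * v 0 + u 1 * v 1 + u 2 * v 2 := by
        linear_combination huv
      have hsq : (u 3 * v 3) ^ 2
          ≤ (u 0 ^ 2 + u 1 ^ 2 + u 2 ^ 2) * (v 0 ^ 2 + v 1 ^ 2 + v 2 ^ 2) := by
        rw [hb']; exact cs
      have h1 : (0:ℝ) ≤ u 0 ^ 2 + u 1 ^ 2 + u 2 ^ 2 := by positivity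
      have h2 : (0:ℝ) ≤ v 0 ^ 2 + v 1 ^ 2 + v 2 ^ 2 := by positivity
      nlinarith [mul_pos hU hV, hsq, mul_nonneg h1 h2, mul_nonneg h1 hV.le,
        mul_nonneg h2 hU.le]
    · exact absurd h0 hkne
    · exact hpos
  refine ⟨k, hkpos, fun x y => ?_⟩
  rw [mform (A x) (A y), mform x y]
  simp only [hsub x y]
  have := hscale (x - y)
  simp only [Pi.sub_apply] at this
  exact this
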